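/- Let φ : (0,∞) → ℝ be a C² solution of φ'' + (2/r)φ' = sin(2φ)/r² + (φ - sin φ cos φ)(1 - cos 2φ)/r⁴ such that: (i) φ(r) = α r⁻² + O(r⁻⁶) and φ'(r) = O(r⁻³) as r → ∞ for some α ∈ ℝ; (ii) lim_{r→0} φ(r) = 0 and lim_{r→0} φ'(r) exists in ℝ. Then φ ≡ 0. -/

import Mathlib

open Real Filter Topology Asymptotics

private lemma AN_phi_deriv (φ φ' φ'' : ℝ → ℝ)
    (h1 : ∀ r : ℝ, 0 < r → HasDerivAt φ (φ' r) r)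
    (h2 : ∀ r : ℝ, 0 < r → HasDerivAt φ' (φ'' r) r)
    (hode : ∀ r : ℝ, 0 < r →
      φ'' r + (2 / r) * φ' r =
        Real.sin (2 * φ r) / r ^ 2 +
          (φ r - Real.sin (φ r) * Real.cos (φ r)) * (1 - Real.cos (2 * φ r)) / r ^ 4)
    (r : ℝ) (hr : 0 < r) :
    HasDerivAt (fun s => s^4 * (φ' s)^2 - 2*s^2 * (Real.sin (φ s))^2
        - (φ s - Real.sin (φ s) * Real.cos (φ s))^2)
      (-4 * r * (Real.sin (φ r))^2) r := by
  have hs : HasDerivAt (fun s => Real.sin (φ s)) (Real.cos (φ r) * φ' r) r :=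
    (Real.hasDerivAt_sin (φ r)).comp r (h1 r hr)
  have hc : HasDerivAt (fun s => Real.cos (φ s)) (-Real.sin (φ r) * φ' r) r :=
    (Real.hasDerivAt_cos (φ r)).comp r (h1 r hr)
  have hA : HasDerivAt (fun s => s^4 * (φ' s)^2)
      (4*r^3 * (φ' r)^2 + r^4 * (2 * φ' r * φ'' r)) r := by
    have := ((hasDerivAt_pow 4 r).mul ((h2 r hr).pow 2))
    refine this.congr_deriv (Eq.symm ?_)
    simp only [Pi.pow_apply, Pi.mul_apply, Pi.sub_apply]
    ring
  have hB : HasDerivAt (fun s => 2*s^2 * (Real.sin (φ s))^2)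
      (4*r * (Real.sin (φ r))^2 + 2*r^2 * (2 * Real.sin (φ r) * (Real.cos (φ r) * φ' r))) r := by
    have := (((hasDerivAt_pow 2 r).const_mul 2).mul (hs.pow 2))
    refine this.congr_deriv (Eq.symm ?_)
    simp only [Pi.pow_apply, Pi.mul_apply, Pi.sub_apply]
    ring
  have hC : HasDerivAt (fun s => (φ s - Real.sin (φ s) * Real.cos (φ s))^2)
      (2 * (φ r - Real.sin (φ r) * Real.cos (φ r)) *
        (φ' r - (Real.cos (φ r) * φ' r * Real.cos (φ r) + Real.sin (φ r) * (-Real.sin (φ r) * φ' r)))) r := by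
    have := ((h1 r hr).sub (hs.mul hc)).pow 2
    refine this.congr_deriv (Eq.symm ?_)
    simp only [Pi.pow_apply, Pi.mul_apply, Pi.sub_apply]
    ring
  have := (hA.sub hB).sub hC
  refine this.congr_deriv (Eq.symm ?_)
  have hode := hode r hr
  rw [Real.sin_two_mul, Real.cos_two_mul] at hode
  have hsc : Real.sin (φ r)^2 = 1 - Real.cos (φ r)^2 := by
    have := Real.sin_sq_add_cos_sq (φ r); linarith
  field_simp at hode
  have h3 : r^3 * (r^4 * φ'' r + 2*r^3*φ' r) =
      r^3 * (2*Real.sin (φ r)*Real.cos (φ r)*r^2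
        + (φ r - Real.sin (φ r)*Real.cos (φ r)) * (2 - 2*Real.cos (φ r)^2)) := by
    linear_combination r^3 * hode
  have hode2 := mul_left_cancel₀ (pow_ne_zero 3 hr.ne') h3
  linear_combination (-2 * φ' r) * hode2 + 2 * φ' r * (φ r - Real.sin (φ r) * Real.cos (φ r)) * hsc

/-- A C² solution φ of the stationary Adkins-Nappi equation on (0,∞) with
    φ(r) = α r⁻² + O(r⁻⁶), φ'(r) = O(r⁻³) as r → ∞, lim_{r→0} φ(r) = 0 and
    lim_{r→0} φ'(r) ∈ ℝ, must vanish identically. -/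
theorem stmt4 (φ φ' φ'' : ℝ → ℝ) (α : ℝ)
    (h1 : ∀ r : ℝ, 0 < r → HasDerivAt φ (φ' r) r)
    (h2 : ∀ r : ℝ, 0 < r → HasDerivAt φ' (φ'' r) r)
    (hode : ∀ r : ℝ, 0 < r →
      φ'' r + (2 / r) * φ' r =
        Real.sin (2 * φ r) / r ^ 2 +
          (φ r - Real.sin (φ r) * Real.cos (φ r)) * (1 - Real.cos (2 * φ r)) / r ^ 4)
    (hasym : (fun r : ℝ => φ r - α / r ^ 2) =O[atTop] fun r : ℝ => 1 / r ^ 6)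
    (hasym' : φ' =O[atTop] fun r : ℝ => 1 / r ^ 3)
    (hlim0 : Tendsto φ (𝓝[>] 0) (𝓝 0))
    (hlim0' : ∃ β : ℝ, Tendsto φ' (𝓝[>] 0) (𝓝 β)) :
    ∀ r : ℝ, 0 < r → φ r = 0 := by
  obtain ⟨β, hβ⟩ := hlim0'
  set Φ : ℝ → ℝ := fun s => s^4 * (φ' s)^2 - 2*s^2 * (Real.sin (φ s))^2
      - (φ s - Real.sin (φ s) * Real.cos (φ s))^2 with hΦdef
  -- Step 1: derivative of Φ
  have hΦd : ∀ r : ℝ, 0 < r → HasDerivAt Φ (-4 * r * (Real.sin (φ r))^2) r :=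
    fun r hr => AN_phi_deriv φ φ' φ'' h1 h2 hode r hr
  -- basic limits at infinity
  have hinv2 : Tendsto (fun r : ℝ => 1 / r^2) atTop (𝓝 0) := by
    have h : Tendsto (fun r : ℝ => r^2) atTop atTop := tendsto_pow_atTop (by norm_num)
    simpa [one_div, Function.comp_def] using tendsto_inv_atTop_zero.comp h
  have hinv6 : Tendsto (fun r : ℝ => 1 / r^6) atTop (𝓝 0) := by
    have h : Tendsto (fun r : ℝ => r^6) atTop atTop := tendsto_pow_atTop (by norm_num)
    simpa [one_div, Function.comp_def] using tendsto_inv_atTop_zero.comp h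
  have hφtop : Tendsto φ atTop (𝓝 0) := by
    have hsub : Tendsto (fun r => φ r - α / r^2) atTop (𝓝 0) := hasym.trans_tendsto hinv6
    have hαt : Tendsto (fun r : ℝ => α / r^2) atTop (𝓝 0) := by
      simpa [div_eq_mul_inv] using hinv2.const_mul α
    simpa using hsub.add hαt
  have hO62 : (fun r : ℝ => 1 / r^6) =O[atTop] (fun r : ℝ => 1 / r^2) := by
    apply IsBigO.of_bound 1
    filter_upwards [eventually_ge_atTop (1:ℝ)] with r hr
    have h0 : (0:ℝ) < r := lt_of_lt_of_le one_pos hr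
    have h26 : r^2 ≤ r^6 := pow_le_pow_right₀ hr (by norm_num)
    rw [Real.norm_eq_abs, Real.norm_eq_abs, abs_of_pos (by positivity),
      abs_of_pos (by positivity), one_mul]
    exact div_le_div_of_nonneg_left one_pos.le (by positivity) h26
  have hφO : φ =O[atTop] (fun r : ℝ => 1 / r^2) := by
    have hα : (fun r : ℝ => α / r^2) =O[atTop] (fun r : ℝ => 1/r^2) := by
      have := (isBigO_refl (fun r : ℝ => 1/r^2) atTop).const_mul_left α
      simpa only [mul_one_div] using this
    simpa using (hasym.trans hO62).add hα
  have hsinO : (fun r => Real.sin (φ r)) =O[atTop] (fun r : ℝ => 1 / r^2) := by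
    refine (IsBigO.of_bound 1 ?_).trans hφO
    filter_upwards with r
    simpa using Real.abs_sin_le_abs (x := φ r)
  -- Φ tends to 0 at infinity
  have hΦtop : Tendsto Φ atTop (𝓝 0) := by
    have T1 : Tendsto (fun r : ℝ => r^4 * (φ' r)^2) atTop (𝓝 0) := by
      have hO : (fun r : ℝ => r^4 * (φ' r)^2) =O[atTop] (fun r : ℝ => r^4 * (1/r^3)^2) :=
        (isBigO_refl (fun r : ℝ => r^4) atTop).mul (hasym'.pow 2)
      refine hO.trans_tendsto ?_
      refine hinv2.congr' ?_
      filter_upwards [eventually_gt_atTop (0:ℝ)] with r hr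
      field_simp
    have T2 : Tendsto (fun r : ℝ => 2*r^2 * (Real.sin (φ r))^2) atTop (𝓝 0) := by
      have hO : (fun r : ℝ => 2*r^2 * (Real.sin (φ r))^2) =O[atTop]
          (fun r : ℝ => 2*r^2 * (1/r^2)^2) :=
        (isBigO_refl (fun r : ℝ => 2*r^2) atTop).mul (hsinO.pow 2)
      refine hO.trans_tendsto ?_
      have : Tendsto (fun r : ℝ => 2 * (1/r^2)) atTop (𝓝 (2*0)) := hinv2.const_mul 2
      rw [mul_zero] at this
      refine this.congr' ?_
      filter_upwards [eventually_gt_atTop (0:ℝ)] with r hr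
      field_simp
    have T3 : Tendsto (fun r : ℝ => (φ r - Real.sin (φ r) * Real.cos (φ r))^2) atTop (𝓝 0) := by
      have hcont : Continuous (fun x : ℝ => (x - Real.sin x * Real.cos x)^2) := by continuity
      have := (hcont.tendsto 0).comp hφtop
      simpa [Function.comp_def] using this
    simpa using (T1.sub T2).sub T3
  -- Φ tends to 0 at 0⁺
  have hrid : Tendsto (fun r : ℝ => r) (𝓝[>] (0:ℝ)) (𝓝 0) :=
    tendsto_id.mono_right nhdsWithin_le_nhds
  have hΦ0 : Tendsto Φ (𝓝[>] (0:ℝ)) (𝓝 0) := by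
    have hsin : Tendsto (fun r => Real.sin (φ r)) (𝓝[>] (0:ℝ)) (𝓝 0) := by
      have := (Real.continuous_sin.tendsto 0).comp hlim0
      simpa [Function.comp_def] using this
    have hcos : Tendsto (fun r => Real.cos (φ r)) (𝓝[>] (0:ℝ)) (𝓝 1) := by
      have := (Real.continuous_cos.tendsto 0).comp hlim0
      simpa [Function.comp_def] using this
    have := (((hrid.pow 4).mul (hβ.pow 2)).sub
        (((hrid.pow 2).const_mul 2).mul (hsin.pow 2))).sub
        ((hlim0.sub (hsin.mul hcos)).pow 2)
    simpa using this
  -- Φ is antitone on (0,∞)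
  have hAnti : AntitoneOn Φ (Set.Ioi (0:ℝ)) := by
    apply antitoneOn_of_deriv_nonpos (convex_Ioi 0)
    · intro x hx
      exact (hΦd x hx).continuousAt.continuousWithinAt
    · intro x hx
      rw [interior_Ioi] at hx
      exact (hΦd x hx).differentiableAt.differentiableWithinAt
    · intro x hx
      rw [interior_Ioi] at hx
      rw [(hΦd x hx).deriv]
      nlinarith [sq_nonneg (Real.sin (φ x)), (Set.mem_Ioi.1 hx).le]
  -- Φ vanishes on (0,∞)
  have hΦ0' : ∀ r : ℝ, 0 < r → Φ r = 0 := by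
    intro r hr
    have hle : Φ r ≤ 0 := by
      refine ge_of_tendsto hΦ0 ?_
      filter_upwards [Ioo_mem_nhdsGT_of_mem (Set.left_mem_Ico.2 hr)] with s hs
      exact hAnti hs.1 hr hs.2.le
    have hge : 0 ≤ Φ r := by
      refine le_of_tendsto hΦtop ?_
      filter_upwards [eventually_ge_atTop r] with s hs
      exact hAnti hr (lt_of_lt_of_le hr hs) hs
    linarith
  intro r hr
  -- sin (φ r) = 0
  have hΦnhds : Φ =ᶠ[𝓝 r] (fun _ => (0:ℝ)) := by
    filter_upwards [isOpen_Ioi.mem_nhds (Set.mem_Ioi.2 hr)] with s hs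
    exact hΦ0' s hs
  have hderiv0 : HasDerivAt Φ 0 r :=
    (hasDerivAt_const r (0:ℝ)).congr_of_eventuallyEq hΦnhds
  have hsin0 : Real.sin (φ r) = 0 := by
    have h := (hΦd r hr).unique hderiv0
    have h2' : Real.sin (φ r)^2 = 0 :=
      (mul_eq_zero.1 h).resolve_left (by intro h'; nlinarith)
    exact pow_eq_zero_iff two_ne_zero |>.mp h2'
  -- φ' r = 0
  have hφ'0 : φ' r = 0 := by
    have hgnhds : (fun s => Real.sin (φ s)) =ᶠ[𝓝 r] (fun _ => (0:ℝ)) := by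
      filter_upwards [isOpen_Ioi.mem_nhds (Set.mem_Ioi.2 hr)] with s hs
      -- sin (φ s) = 0 for all s > 0
      have h := (hΦd s hs).unique
        ((hasDerivAt_const s (0:ℝ)).congr_of_eventuallyEq (by
          filter_upwards [isOpen_Ioi.mem_nhds (Set.mem_Ioi.2 hs)] with t ht
          exact hΦ0' t ht))
      have hs' : (0:ℝ) < s := hs
      have h2' : Real.sin (φ s)^2 = 0 :=
        (mul_eq_zero.1 h).resolve_left (by intro h'; nlinarith)
      exact pow_eq_zero_iff two_ne_zero |>.mp h2'
    have hg : HasDerivAt (fun s => Real.sin (φ s)) (Real.cos (φ r) * φ' r) r :=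
      (Real.hasDerivAt_sin (φ r)).comp r (h1 r hr)
    have hg0 : HasDerivAt (fun s => Real.sin (φ s)) 0 r :=
      (hasDerivAt_const r (0:ℝ)).congr_of_eventuallyEq hgnhds
    have hcs : Real.cos (φ r) * φ' r = 0 := hg.unique hg0
    have hcos : Real.cos (φ r) ≠ 0 := by
      have := Real.sin_sq_add_cos_sq (φ r)
      intro h
      rw [hsin0, h] at this
      norm_num at this
    exact (mul_eq_zero.1 hcs).resolve_left hcos
  -- conclude
  have hΦr := hΦ0' r hr
  have : (φ r)^2 = 0 := by
    have : Φ r = r^4 * (φ' r)^2 - 2*r^2 * (Real.sin (φ r))^2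
        - (φ r - Real.sin (φ r) * Real.cos (φ r))^2 := rfl
    rw [hΦr] at this
    rw [hsin0, hφ'0] at this
    nlinarith [this]
  exact pow_eq_zero_iff two_ne_zero |>.mp this
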